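/- With f, σ, φ as above (f(0)=0, c₀ ≤ f' ≤ c₁, c₀ρ ≤ f ≤ c₁ρ, σ(t)=∫₀ᵗ f^{n-1}, φ(ρ)=σ⁻¹(σ(ρ)+σ(A)), A>0), let τ(ρ) = f(φ(ρ))/f(ρ). Then for fixed τ > 1, as A → 0+ with ρ = ρ(A,τ) determined by f(φ(ρ)) = τ f(ρ), one has lim_{A→0+} A/ρ(A,τ) = (τⁿ - 1)^{1/n}. -/

import Mathlib

open Filter Topology Set intervalIntegral

lemma aux_alg (n : ℕ) (A r p sR sA fr t : ℝ) (hA : 0<A) (hr : 0<r) (hp : 0<p)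
    (hsR : 0<sR) (hsA : 0<sA) (hfr : 0<fr) (ht : 0<t) :
    (((sR+sA) / p^n) / (sR / r^n) * (t * (fr / r) / (t * fr / p)) ^ n - 1) *
      ((sR / r^n) / (sA / A^n)) = (A / r) ^ n := by
  have h1 : t * (fr / r) / (t * fr / p) = p / r := by
    field_simp
  rw [h1]
  rw [div_pow, div_pow]
  field_simp
  ring

set_option maxHeartbeats 1000000 in
/-- with `f, σ, φ_A` as in the radial incompressible setting and, for fixed
`τ > 1`, `ρ(A,τ)` the unique `ρ > 0` with `f(φ_A(ρ)) = τ f(ρ)`, one has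
`A / ρ(A,τ) → (τⁿ - 1)^{1/n}` as `A → 0⁺`. -/
theorem stmt_8 (n : ℕ) (hn : 2 ≤ n) (f : ℝ → ℝ) (c₀ c₁ : ℝ)
    (hc₀ : 0 < c₀) (hc : c₀ ≤ c₁) (hf : ContDiff ℝ 1 f) (hf0 : f 0 = 0)
    (hf'0 : deriv f 0 = 1)
    (hf' : ∀ ρ ≥ (0:ℝ), c₀ ≤ deriv f ρ ∧ deriv f ρ ≤ c₁)
    (hfb : ∀ ρ ≥ (0:ℝ), c₀ * ρ ≤ f ρ ∧ f ρ ≤ c₁ * ρ)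
    (φ : ℝ → ℝ → ℝ)
    (hφ : ∀ A > (0:ℝ), ∀ ρ ≥ (0:ℝ), 0 ≤ φ A ρ ∧
      (∫ s in (0:ℝ)..(φ A ρ), f s ^ (n - 1)) =
        (∫ s in (0:ℝ)..ρ, f s ^ (n - 1)) + ∫ s in (0:ℝ)..A, f s ^ (n - 1))
    (τ : ℝ) (hτ : 1 < τ) (R : ℝ → ℝ)
    (hR : ∀ A > (0:ℝ), 0 < R A ∧ f (φ A (R A)) = τ * f (R A)) :
    Tendsto (fun A => A / R A) (𝓝[>] 0) (𝓝 ((τ ^ n - 1) ^ ((n : ℝ)⁻¹))) := by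
  have hc₁ : 0 < c₁ := lt_of_lt_of_le hc₀ hc
  have hτ0 : 0 < τ := lt_trans one_pos hτ
  have hnne : n ≠ 0 := by omega
  have hn0 : (n:ℝ) ≠ 0 := by positivity
  have hnpos : (0:ℝ) < n := by positivity
  have hfc : Continuous f := hf.continuous
  have hgc : Continuous fun s : ℝ => f s ^ (n - 1) := hfc.pow _
  set σ : ℝ → ℝ := fun t => ∫ s in (0:ℝ)..t, f s ^ (n - 1) with hσdef
  have hInt : ∀ a b : ℝ, IntervalIntegrable (fun s => f s ^ (n - 1)) MeasureTheory.volume a b :=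
    fun a b => (hgc.intervalIntegrable a b)
  -- basic facts on f
  have hfpos : ∀ x : ℝ, 0 < x → 0 < f x := by
    intro x hx
    have := (hfb x hx.le).1
    nlinarith
  have hfnn : ∀ x : ℝ, 0 ≤ x → 0 ≤ f x := by
    intro x hx
    have := (hfb x hx).1
    nlinarith
  have hfmono : StrictMonoOn f (Ici (0:ℝ)) := by
    apply strictMonoOn_of_deriv_pos (convex_Ici 0) hfc.continuousOn
    intro x hx
    rw [interior_Ici] at hx
    exact lt_of_lt_of_le hc₀ (hf' x (le_of_lt hx)).1
  -- σ facts
  have hσ0 : σ 0 = 0 := integral_same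
  have hσadd : ∀ a b : ℝ, σ b = σ a + ∫ s in a..b, f s ^ (n - 1) := by
    intro a b
    rw [hσdef]
    exact (integral_add_adjacent_intervals (hInt 0 a) (hInt a b)).symm
  have hσD : ∀ t : ℝ, HasDerivAt σ (f t ^ (n - 1)) t := by
    intro t
    exact integral_hasDerivAt_right (hInt 0 t)
      (hgc.stronglyMeasurableAtFilter _ _) hgc.continuousAt
  have hσpos : ∀ t : ℝ, 0 < t → 0 < σ t := by
    intro t ht
    exact intervalIntegral_pos_of_pos_on (hInt 0 t)
      (fun x hx => pow_pos (hfpos x hx.1) _) ht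
  -- the power integral
  have hpowint : ∀ (c t : ℝ), 0 ≤ t → (∫ s in (0:ℝ)..t, (c * s) ^ (n-1)) = c ^ (n-1) * t ^ n / n := by
    intro c t _
    have : (∫ s in (0:ℝ)..t, (c * s) ^ (n-1)) = c ^ (n-1) * ∫ s in (0:ℝ)..t, s ^ (n-1) := by
      rw [← intervalIntegral.integral_const_mul]
      congr 1 with s
      rw [mul_pow]
    rw [this, integral_pow]
    rw [show n - 1 + 1 = n from by omega]
    rw [zero_pow hnne, Nat.cast_sub (by omega : 1 ≤ n)]
    push_cast
    field_simp
    rw [sub_zero, sub_add_cancel, mul_div_assoc, div_self hn0, mul_one]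
  -- σ upper bound
  have hσub : ∀ t : ℝ, 0 ≤ t → σ t ≤ c₁ ^ (n-1) * t ^ n / n := by
    intro t ht
    rw [← hpowint c₁ t ht, hσdef]
    have hcc : Continuous fun s : ℝ => (c₁ * s) ^ (n-1) :=
      (continuous_const.mul continuous_id).pow _
    apply intervalIntegral.integral_mono_on ht (hInt 0 t) (hcc.intervalIntegrable 0 t)
    intro x hx
    exact pow_le_pow_left₀ (hfnn x hx.1) (hfb x hx.1).2 _
  -- per-A facts
  have hKey : ∀ A : ℝ, 0 < A →
      0 < R A ∧ 0 < φ A (R A) ∧ R A < φ A (R A) ∧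
      φ A (R A) ≤ τ * c₁ / c₀ * R A ∧ σ (φ A (R A)) = σ (R A) + σ A := by
    intro A hA
    obtain ⟨hR0, hfR⟩ := hR A hA
    obtain ⟨hφ0, hσφ⟩ := hφ A hA (R A) hR0.le
    have hfRpos : 0 < f (R A) := hfpos _ hR0
    have hfφpos : 0 < f (φ A (R A)) := by rw [hfR]; positivity
    have hφpos : 0 < φ A (R A) := by
      rcases lt_or_eq_of_le hφ0 with h | h
      · exact h
      · exfalso; rw [← h, hf0] at hfφpos; exact lt_irrefl 0 hfφpos
    have hlt : R A < φ A (R A) := by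
      by_contra hcon
      push_neg at hcon
      have := hfmono.monotoneOn (mem_Ici.mpr hφ0) (mem_Ici.mpr hR0.le) hcon
      nlinarith
    have hub : φ A (R A) ≤ τ * c₁ / c₀ * R A := by
      have h1 := (hfb _ hφ0).1
      have h2 := (hfb _ hR0.le).2
      rw [div_mul_eq_mul_div, le_div_iff₀ hc₀]
      nlinarith
    exact ⟨hR0, hφpos, hlt, hub, hσφ⟩
  -- linear bound R A ≤ K * A
  have hτ1 : (0:ℝ) < τ - 1 := sub_pos.mpr hτ
  set α : ℝ := (τ - 1) * c₀ / c₁ with hα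
  have hαpos : 0 < α := by positivity
  set C : ℝ := c₁ ^ (n-1) / (n * α * c₀ ^ (n-1)) with hC
  have hCpos : 0 < C := by positivity
  set K : ℝ := C ^ ((n:ℝ)⁻¹) with hK
  have hKpos : 0 < K := Real.rpow_pos_of_pos hCpos _
  have hKn : K ^ n = C := by
    rw [hK, ← Real.rpow_natCast (C ^ ((n:ℝ)⁻¹)) n, ← Real.rpow_mul hCpos.le,
      inv_mul_cancel₀ hn0, Real.rpow_one]
  have hRle : ∀ A : ℝ, 0 < A → R A ≤ K * A := by
    intro A hA
    obtain ⟨hR0, hφpos, hlt, hub, hσφ⟩ := hKey A hA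
    obtain ⟨-, hfR⟩ := hR A hA
    have hMVT : f (φ A (R A)) - f (R A) ≤ c₁ * (φ A (R A) - R A) := by
      have hdint : f (φ A (R A)) - f (R A) = ∫ s in (R A)..(φ A (R A)), deriv f s := by
        rw [intervalIntegral.integral_deriv_eq_sub]
        · intro x _; exact (hf.differentiable one_ne_zero).differentiableAt
        · exact ((hf.continuous_deriv le_rfl).intervalIntegrable _ _)
      rw [hdint]
      calc (∫ s in (R A)..(φ A (R A)), deriv f s)
          ≤ ∫ _s in (R A)..(φ A (R A)), c₁ := by
            apply intervalIntegral.integral_mono_on hlt.le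
              ((hf.continuous_deriv le_rfl).intervalIntegrable _ _)
              intervalIntegrable_const
            intro x hx
            exact (hf' x (le_trans hR0.le hx.1)).2
        _ = c₁ * (φ A (R A) - R A) := by
            rw [intervalIntegral.integral_const, smul_eq_mul, mul_comm]
    have hgap : α * R A ≤ φ A (R A) - R A := by
      have h1 := (hfb _ hR0.le).1
      rw [hfR] at hMVT
      rw [hα, div_mul_eq_mul_div, div_le_iff₀ hc₁]
      nlinarith
    have hint : σ (φ A (R A)) - σ (R A) = ∫ s in (R A)..(φ A (R A)), f s ^ (n-1) := by
      rw [hσadd (R A) (φ A (R A))]; ring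
    have hlow : (φ A (R A) - R A) * (c₀ * R A) ^ (n-1) ≤ σ (φ A (R A)) - σ (R A) := by
      rw [hint]
      calc (φ A (R A) - R A) * (c₀ * R A)^(n-1)
          = ∫ _s in (R A)..(φ A (R A)), (c₀ * R A)^(n-1) := by
            rw [intervalIntegral.integral_const, smul_eq_mul, mul_comm]
        _ ≤ _ := by
            apply intervalIntegral.integral_mono_on hlt.le intervalIntegrable_const (hInt _ _)
            intro x hx
            apply pow_le_pow_left₀ (by positivity)
            calc c₀ * R A ≤ c₀ * x := by nlinarith [hx.1]
              _ ≤ f x := (hfb x (le_trans hR0.le hx.1)).1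
    have hσA : σ A ≤ c₁^(n-1) * A^n / n := hσub A hA.le
    have hcomb : α * R A * (c₀ * R A)^(n-1) ≤ c₁^(n-1) * A^n / n := by
      have h2 : (0:ℝ) ≤ (c₀ * R A)^(n-1) := by positivity
      have e1 := mul_le_mul_of_nonneg_right hgap h2
      have e2 : σ (φ A (R A)) - σ (R A) = σ A := by rw [hσφ]; ring
      linarith [hlow]
    have hcomb2 : α * R A * (c₀ * R A)^(n-1) * n ≤ c₁^(n-1) * A^n := by
      rw [← le_div_iff₀ hnpos]
      calc α * R A * (c₀ * R A)^(n-1) ≤ c₁^(n-1) * A^n / n := hcomb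
        _ = c₁^(n-1) * A^n / n := rfl
    have hRn : R A ^ n ≤ (K * A)^n := by
      rw [mul_pow, hKn, hC]
      have hRsplit : R A ^ n = R A * R A ^ (n-1) := by
        conv_lhs => rw [show n = 1 + (n-1) from by omega]
        rw [pow_add, pow_one]
      rw [hRsplit, div_mul_eq_mul_div, le_div_iff₀ (by positivity)]
      rw [mul_pow] at hcomb2
      calc R A * R A ^ (n - 1) * (↑n * α * c₀ ^ (n - 1))
          = α * R A * (c₀ ^ (n-1) * R A ^ (n-1)) * n := by ring
        _ ≤ c₁^(n-1) * A^n := hcomb2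
    exact (pow_le_pow_iff_left₀ hR0.le (by positivity) hnne).mp hRn
  -- tendsto of R and φ to 0 within Ioi
  have hRtends : Tendsto R (𝓝[>] (0:ℝ)) (𝓝[>] 0) := by
    rw [tendsto_nhdsWithin_iff]
    constructor
    · have hup : Tendsto (fun A : ℝ => K * A) (𝓝[>](0:ℝ)) (𝓝 0) := by
        have h : Tendsto (fun A : ℝ => K * A) (𝓝 0) (𝓝 (K*0)) :=
          (continuous_const.mul continuous_id).tendsto 0
        simpa using h.mono_left nhdsWithin_le_nhds
      refine tendsto_of_tendsto_of_tendsto_of_le_of_le' tendsto_const_nhds hup ?_ ?_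
      · filter_upwards [self_mem_nhdsWithin] with A hA; exact (hKey A hA).1.le
      · filter_upwards [self_mem_nhdsWithin] with A hA; exact hRle A hA
    · filter_upwards [self_mem_nhdsWithin] with A hA; exact (hKey A hA).1
  have hφtends : Tendsto (fun A => φ A (R A)) (𝓝[>] (0:ℝ)) (𝓝[>] 0) := by
    rw [tendsto_nhdsWithin_iff]
    constructor
    · have hup : Tendsto (fun A : ℝ => τ * c₁ / c₀ * (K * A)) (𝓝[>](0:ℝ)) (𝓝 0) := by
        have h : Tendsto (fun A : ℝ => τ * c₁ / c₀ * (K * A)) (𝓝 0) (𝓝 (τ * c₁ / c₀ * (K*0))) :=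
          (continuous_const.mul (continuous_const.mul continuous_id)).tendsto 0
        simpa using h.mono_left nhdsWithin_le_nhds
      refine tendsto_of_tendsto_of_tendsto_of_le_of_le' tendsto_const_nhds hup ?_ ?_
      · filter_upwards [self_mem_nhdsWithin] with A hA; exact (hKey A hA).2.1.le
      · filter_upwards [self_mem_nhdsWithin] with A hA
        calc φ A (R A) ≤ τ * c₁ / c₀ * R A := (hKey A hA).2.2.2.1
          _ ≤ τ * c₁ / c₀ * (K * A) := by
            have h1 := hRle A hA
            have h0 : 0 < τ * c₁ / c₀ := by positivity
            nlinarith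
    · filter_upwards [self_mem_nhdsWithin] with A hA; exact (hKey A hA).2.1
  -- slope limit
  have Hg : Tendsto (fun s => f s / s) (𝓝[>] (0:ℝ)) (𝓝 1) := by
    have hd : HasDerivAt f 1 0 := by
      have h := ((hf.differentiable one_ne_zero) 0).hasDerivAt
      rwa [hf'0] at h
    have h1 := hasDerivAt_iff_tendsto_slope.mp hd
    have h2 : Tendsto (slope f 0) (𝓝[>] (0:ℝ)) (𝓝 1) :=
      h1.mono_left (nhdsWithin_mono 0 (fun x hx => ne_of_gt hx))
    apply Tendsto.congr' ?_ h2
    filter_upwards [self_mem_nhdsWithin] with x hx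
    rw [slope_def_field, hf0]
    field_simp
    simp only [sub_zero]
  -- sigma ratio limit via L'Hopital
  have Hh : Tendsto (fun t => σ t / t ^ n) (𝓝[>] (0:ℝ)) (𝓝 ((n:ℝ)⁻¹)) := by
    apply HasDerivAt.lhopital_zero_nhdsGT
      (f' := fun t => f t ^ (n-1)) (g' := fun t => (n:ℝ) * t ^ (n-1))
    · filter_upwards with t; exact hσD t
    · filter_upwards with t; exact hasDerivAt_pow n t
    · filter_upwards [self_mem_nhdsWithin] with t ht
      have ht' : (0:ℝ) < t := ht
      positivity
    · have hdiff : Differentiable ℝ σ := fun t => (hσD t).differentiableAt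
      have h : Tendsto σ (𝓝[>] (0:ℝ)) (𝓝 (σ 0)) :=
        (hdiff.continuous.tendsto 0).mono_left nhdsWithin_le_nhds
      rwa [hσ0] at h
    · have h : Tendsto (fun t:ℝ => t ^ n) (𝓝[>] (0:ℝ)) (𝓝 ((0:ℝ)^n)) :=
        ((continuous_pow n).tendsto 0).mono_left nhdsWithin_le_nhds
      rwa [zero_pow hnne] at h
    · have h1 : Tendsto (fun t => (f t / t)^(n-1) * (n:ℝ)⁻¹) (𝓝[>](0:ℝ))
          (𝓝 ((1:ℝ)^(n-1) * (n:ℝ)⁻¹)) := (Hg.pow (n-1)).mul tendsto_const_nhds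
      simp only [one_pow, one_mul] at h1
      apply Tendsto.congr' ?_ h1
      filter_upwards [self_mem_nhdsWithin] with t ht
      have ht' : (t:ℝ) ≠ 0 := ne_of_gt ht
      rw [div_pow, mul_comm ((n:ℝ)) (t ^ (n-1)), ← div_div]
      ring
  -- composed limits
  have HhR : Tendsto (fun A => σ (R A) / (R A) ^ n) (𝓝[>](0:ℝ)) (𝓝 ((n:ℝ)⁻¹)) := Hh.comp hRtends
  have Hhφ : Tendsto (fun A => σ (φ A (R A)) / (φ A (R A)) ^ n) (𝓝[>](0:ℝ)) (𝓝 ((n:ℝ)⁻¹)) :=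
    Hh.comp hφtends
  have HgR : Tendsto (fun A => f (R A) / R A) (𝓝[>](0:ℝ)) (𝓝 1) := Hg.comp hRtends
  have Hgφ : Tendsto (fun A => f (φ A (R A)) / (φ A (R A))) (𝓝[>](0:ℝ)) (𝓝 1) := Hg.comp hφtends
  have hinv : ((n:ℝ)⁻¹) ≠ 0 := inv_ne_zero hn0
  have hτconst : Tendsto (fun _ : ℝ => τ) (𝓝[>](0:ℝ)) (𝓝 τ) := tendsto_const_nhds
  have HE : Tendsto (fun A => ((σ (φ A (R A)) / (φ A (R A))^n) / (σ (R A) / (R A)^n) *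
      (τ * (f (R A) / R A) / (f (φ A (R A)) / φ A (R A))) ^ n - 1) *
      ((σ (R A) / (R A)^n) / (σ A / A^n))) (𝓝[>](0:ℝ)) (𝓝 (τ ^ n - 1)) := by
    have h := (((Hhφ.div HhR hinv).mul
      (((hτconst.mul HgR).div Hgφ one_ne_zero).pow n)).sub
      (tendsto_const_nhds : Tendsto (fun _ : ℝ => (1:ℝ)) (𝓝[>](0:ℝ)) (𝓝 1))).mul (HhR.div Hh hinv)
    have heq : ((n:ℝ)⁻¹ / (n:ℝ)⁻¹ * (τ * 1 / 1) ^ n - 1) * ((n:ℝ)⁻¹ / (n:ℝ)⁻¹) = τ ^ n - 1 := by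
      rw [div_self hinv]; ring
    rwa [heq] at h
  have Hfinal : Tendsto (fun A => (((σ (φ A (R A)) / (φ A (R A))^n) / (σ (R A) / (R A)^n) *
      (τ * (f (R A) / R A) / (f (φ A (R A)) / φ A (R A))) ^ n - 1) *
      ((σ (R A) / (R A)^n) / (σ A / A^n))) ^ ((n:ℝ)⁻¹)) (𝓝[>](0:ℝ))
      (𝓝 ((τ^n - 1) ^ ((n:ℝ)⁻¹))) := by
    have hcont : ContinuousAt (fun x : ℝ => x ^ ((n:ℝ)⁻¹)) (τ^n - 1) :=
      Real.continuousAt_rpow_const _ _ (Or.inr (by positivity))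
    exact hcont.tendsto.comp HE
  apply Tendsto.congr' ?_ Hfinal
  filter_upwards [self_mem_nhdsWithin] with A hA
  obtain ⟨hR0, hφpos, hlt, hub, hσφ⟩ := hKey A hA
  obtain ⟨-, hfR⟩ := hR A hA
  have hfRpos : 0 < f (R A) := hfpos _ hR0
  have hfφpos : 0 < f (φ A (R A)) := hfpos _ hφpos
  have hσRpos := hσpos _ hR0
  have hσApos := hσpos _ hA
  have hEeq : ((σ (φ A (R A)) / (φ A (R A))^n) / (σ (R A) / (R A)^n) *
      (τ * (f (R A) / R A) / (f (φ A (R A)) / φ A (R A))) ^ n - 1) *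
      ((σ (R A) / (R A)^n) / (σ A / A^n)) = (A / R A) ^ n := by
    rw [hσφ, hfR]
    exact aux_alg n A (R A) (φ A (R A)) (σ (R A)) (σ A) (f (R A)) τ hA hR0 hφpos
      hσRpos hσApos hfRpos hτ0
  rw [hEeq, ← Real.rpow_natCast (A / R A) n, ← Real.rpow_mul (div_pos hA hR0).le,
    mul_inv_cancel₀ hn0, Real.rpow_one]
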